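/- Let G be a finite connected non-bipartite graph, and let T^{(k)} = Ã^k be the k-th power of the symmetrically normalized adjacency matrix with self-loops. Then lim_{k→∞} S(T^{(k)}) = 0, where S is the pairwise row-normalized ℓ¹ smoothness score. -/

import Mathlib

open Finset Filter

lemma osc_contract {n : ℕ} (hne : (Finset.univ : Finset (Fin n)).Nonempty)
    (Q : Matrix (Fin n) (Fin n) ℝ) (ε : ℝ)
    (hQ : ∀ i j, ε ≤ Q i j) (hrow : ∀ i, ∑ j, Q i j = 1) (v : Fin n → ℝ) :
    univ.sup' hne (Q.mulVec v) - univ.inf' hne (Q.mulVec v)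
      ≤ (1 - n * ε) * (univ.sup' hne v - univ.inf' hne v) := by
  obtain ⟨i0, -, h0⟩ := Finset.exists_mem_eq_sup' hne (Q.mulVec v)
  obtain ⟨i1, -, h1⟩ := Finset.exists_mem_eq_inf' hne (Q.mulVec v)
  set M := univ.sup' hne v with hM
  set m := univ.inf' hne v with hm
  have hvM : ∀ j, v j ≤ M := fun j => Finset.le_sup' v (mem_univ j)
  have hvm : ∀ j, m ≤ v j := fun j => Finset.inf'_le v (mem_univ j)
  have hmM : m ≤ M := le_trans (hvm i0) (hvM i0)
  set c : Fin n → ℝ := fun j => min (Q i0 j) (Q i1 j) with hc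
  set S := ∑ j, c j with hS
  have hεS : (n : ℝ) * ε ≤ S := by
    have h := Finset.sum_le_sum (fun j (_ : j ∈ univ) => le_min (hQ i0 j) (hQ i1 j))
    simpa [mul_comm] using h
  have hS1 : S ≤ 1 := by
    rw [← hrow i0]; exact Finset.sum_le_sum fun j _ => min_le_left _ _
  have e1 : Q.mulVec v i0 - Q.mulVec v i1
      = ∑ j, (Q i0 j - c j) * v j - ∑ j, (Q i1 j - c j) * v j := by
    simp only [Matrix.mulVec, dotProduct, sub_mul, Finset.sum_sub_distrib]
    ring
  have e2 : ∑ j, (Q i0 j - c j) * v j ≤ (1 - S) * M := by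
    have h := Finset.sum_le_sum fun j (_ : j ∈ univ) =>
      mul_le_mul_of_nonneg_left (hvM j) (sub_nonneg.2 (min_le_left (Q i0 j) (Q i1 j)))
    calc ∑ j, (Q i0 j - c j) * v j ≤ ∑ j, (Q i0 j - c j) * M := h
      _ = (1 - S) * M := by rw [← Finset.sum_mul, Finset.sum_sub_distrib, hrow i0]
  have e3 : (1 - S) * m ≤ ∑ j, (Q i1 j - c j) * v j := by
    have h := Finset.sum_le_sum fun j (_ : j ∈ univ) =>
      mul_le_mul_of_nonneg_left (hvm j) (sub_nonneg.2 (min_le_right (Q i0 j) (Q i1 j)))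
    calc (1 - S) * m = ∑ j, (Q i1 j - c j) * m := by
          rw [← Finset.sum_mul, Finset.sum_sub_distrib, hrow i1, hS]
      _ ≤ ∑ j, (Q i1 j - c j) * v j := h
  have key : Q.mulVec v i0 - Q.mulVec v i1 ≤ (1 - S) * (M - m) := by
    rw [e1]; nlinarith [e2, e3]
  rw [h0, h1]
  calc Q.mulVec v i0 - Q.mulVec v i1 ≤ (1 - S) * (M - m) := key
    _ ≤ (1 - n * ε) * (M - m) :=
        mul_le_mul_of_nonneg_right (by linarith) (sub_nonneg.2 hmM)

lemma pow_entry_nonneg {n : ℕ} (P : Matrix (Fin n) (Fin n) ℝ) (hP0 : ∀ i j, 0 ≤ P i j) :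
    ∀ k i j, 0 ≤ (P ^ k) i j := by
  intro k
  induction k with
  | zero => intro i j; rw [pow_zero]
            by_cases h : i = j <;> simp [Matrix.one_apply, h]
  | succ k ih =>
      intro i j; rw [pow_succ, Matrix.mul_apply]
      exact Finset.sum_nonneg fun l _ => mul_nonneg (ih i l) (hP0 l j)

lemma pow_row_sum {n : ℕ} (P : Matrix (Fin n) (Fin n) ℝ) (hProw : ∀ i, ∑ j, P i j = 1) :
    ∀ k i, ∑ j, (P ^ k) i j = 1 := by
  intro k
  induction k with
  | zero => intro i; simp [Matrix.one_apply]
  | succ k ih =>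
      intro i
      rw [pow_succ]
      simp only [Matrix.mul_apply]
      rw [Finset.sum_comm]
      have h : ∀ l, ∑ j, (P ^ k) i l * P l j = (P ^ k) i l := fun l => by
        rw [← Finset.mul_sum, hProw, mul_one]
      rw [Finset.sum_congr rfl fun l _ => h l]
      exact ih i

lemma stat_pow {n : ℕ} (P : Matrix (Fin n) (Fin n) ℝ) (μ : Fin n → ℝ)
    (hstat : ∀ j, ∑ i, μ i * P i j = μ j) : ∀ k j, ∑ i, μ i * (P ^ k) i j = μ j := by
  intro k
  induction k with
  | zero => intro j; simp [Matrix.one_apply]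
  | succ k ih =>
      intro j
      rw [pow_succ]
      simp only [Matrix.mul_apply, Finset.mul_sum]
      rw [Finset.sum_comm]
      have h : ∀ l, ∑ i, μ i * ((P ^ k) i l * P l j) = μ l * P l j := fun l => by
        rw [Finset.sum_congr rfl fun i _ => (mul_assoc (μ i) _ _).symm, ← Finset.sum_mul, ih l]
      rw [Finset.sum_congr rfl fun l _ => h l]
      exact hstat j

lemma pk_tendsto {n : ℕ} (hne : (Finset.univ : Finset (Fin n)).Nonempty)
    (P : Matrix (Fin n) (Fin n) ℝ) (μ : Fin n → ℝ)
    (hP0 : ∀ i j, 0 ≤ P i j) (hProw : ∀ i, ∑ j, P i j = 1)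
    (hμ0 : ∀ j, 0 ≤ μ j) (hμsum : ∑ j, μ j = 1) (hstat : ∀ j, ∑ i, μ i * P i j = μ j)
    (m : ℕ) (hm1 : 1 ≤ m) (ε : ℝ) (hε : 0 < ε) (hεle : ∀ i j, ε ≤ (P ^ m) i j)
    (i j : Fin n) : Tendsto (fun k => (P ^ k) i j) atTop (nhds (μ j)) := by
  obtain ⟨i0, -⟩ := id hne
  set c : ℝ := 1 - n * ε with hcdef
  have hnε : 0 < (n : ℝ) * ε :=
    mul_pos (by exact_mod_cast i0.pos) hε
  have hc0 : 0 ≤ c := by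
    have h1 : ∑ _j : Fin n, ε ≤ ∑ j', (P ^ m) i0 j' :=
      Finset.sum_le_sum fun j' _ => hεle i0 j'
    rw [pow_row_sum P hProw m i0] at h1
    simp only [Finset.sum_const, Finset.card_univ, Fintype.card_fin, nsmul_eq_mul] at h1
    linarith
  have hc1 : c < 1 := by rw [hcdef]; linarith
  set f : ℕ → Fin n → ℝ := fun k i' => (P ^ k) i' j with hfdef
  set g : ℕ → ℝ := fun k => univ.sup' hne (f k) - univ.inf' hne (f k) with hgdef
  have hcol : ∀ a b, f (a + b) = (P ^ a).mulVec (f b) := by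
    intro a b; funext i'
    simp [hfdef, pow_add, Matrix.mul_apply, Matrix.mulVec, dotProduct]
  have hle1 : ∀ k i', f k i' ≤ 1 := by
    intro k i'
    have h := Finset.single_le_sum (f := fun j' => (P ^ k) i' j')
      (fun j' _ => pow_entry_nonneg P hP0 k i' j') (mem_univ j)
    rw [pow_row_sum P hProw k i'] at h
    exact h
  have hg1 : ∀ k, g k ≤ 1 := by
    intro k
    have h1 : univ.sup' hne (f k) ≤ 1 := Finset.sup'_le hne _ fun i' _ => hle1 k i'
    have h2 : (0 : ℝ) ≤ univ.inf' hne (f k) :=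
      Finset.le_inf' hne _ fun i' _ => pow_entry_nonneg P hP0 k i' j
    simp only [hgdef]; linarith
  have hstep : ∀ q r, g (m * q + r) ≤ c ^ q * g r := by
    intro q
    induction q with
    | zero => intro r; simpa using le_refl (g r)
    | succ q ih =>
        intro r
        have he : m * (q + 1) + r = m + (m * q + r) := by ring
        have hcon := osc_contract hne (P ^ m) ε (fun i' j' => hεle i' j')
          (pow_row_sum P hProw m) (f (m * q + r))
        calc g (m * (q + 1) + r)
            = univ.sup' hne ((P ^ m).mulVec (f (m * q + r)))
              - univ.inf' hne ((P ^ m).mulVec (f (m * q + r))) := by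
              rw [hgdef]; simp only; rw [he, hcol m (m * q + r)]
          _ ≤ c * g (m * q + r) := hcon
          _ ≤ c * (c ^ q * g r) := mul_le_mul_of_nonneg_left (ih r) hc0
          _ = c ^ (q + 1) * g r := by ring
  have hosc : ∀ k, g k ≤ c ^ (k / m) := by
    intro k
    have hk : m * (k / m) + k % m = k := Nat.div_add_mod k m
    calc g k = g (m * (k / m) + k % m) := by rw [hk]
      _ ≤ c ^ (k / m) * g (k % m) := hstep _ _
      _ ≤ c ^ (k / m) * 1 := mul_le_mul_of_nonneg_left (hg1 _) (pow_nonneg hc0 _)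
      _ = c ^ (k / m) := mul_one _
  have hμub : ∀ k, μ j ≤ univ.sup' hne (f k) := by
    intro k
    rw [← stat_pow P μ hstat k j]
    calc ∑ i', μ i' * (P ^ k) i' j ≤ ∑ i', μ i' * univ.sup' hne (f k) :=
          Finset.sum_le_sum fun i' _ =>
            mul_le_mul_of_nonneg_left (Finset.le_sup' (f k) (mem_univ i')) (hμ0 i')
      _ = univ.sup' hne (f k) := by rw [← Finset.sum_mul, hμsum, one_mul]
  have hμlb : ∀ k, univ.inf' hne (f k) ≤ μ j := by
    intro k
    rw [← stat_pow P μ hstat k j]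
    calc univ.inf' hne (f k) = ∑ i', μ i' * univ.inf' hne (f k) := by
          rw [← Finset.sum_mul, hμsum, one_mul]
      _ ≤ ∑ i', μ i' * (P ^ k) i' j :=
          Finset.sum_le_sum fun i' _ =>
            mul_le_mul_of_nonneg_left (Finset.inf'_le (f k) (mem_univ i')) (hμ0 i')
  have hclose : ∀ k, |(P ^ k) i j - μ j| ≤ c ^ (k / m) := by
    intro k
    have h1 : f k i ≤ univ.sup' hne (f k) := Finset.le_sup' (f k) (mem_univ i)
    have h2 : univ.inf' hne (f k) ≤ f k i := Finset.inf'_le (f k) (mem_univ i)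
    have h3 := hμub k
    have h4 := hμlb k
    have h5 := hosc k
    have hfi : f k i = (P ^ k) i j := rfl
    simp only [hgdef] at h5
    rw [abs_le]
    constructor <;> [nlinarith [h1, h2, h3, h4, h5]; nlinarith [h1, h2, h3, h4, h5]]
  have hdiv : Tendsto (fun k : ℕ => k / m) atTop atTop :=
    tendsto_atTop_atTop.2 fun b => ⟨b * m, fun a ha => (Nat.le_div_iff_mul_le hm1).2 ha⟩
  have hgeo : Tendsto (fun k : ℕ => c ^ (k / m)) atTop (nhds 0) :=
    (tendsto_pow_atTop_nhds_zero_of_lt_one hc0 hc1).comp hdiv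
  have habs : Tendsto (fun k => |(P ^ k) i j - μ j|) atTop (nhds 0) :=
    squeeze_zero (fun k => abs_nonneg _) hclose hgeo
  rw [tendsto_iff_dist_tendsto_zero]
  simpa [Real.dist_eq] using habs

noncomputable def l1norm {n : ℕ} (v : Fin n → ℝ) : ℝ := ∑ j, |v j|

noncomputable def normRow {n : ℕ} (T : Matrix (Fin n) (Fin n) ℝ) (i : Fin n) : Fin n → ℝ :=
  (l1norm (T i))⁻¹ • T i

noncomputable def smoothS {n : ℕ} (T : Matrix (Fin n) (Fin n) ℝ) : ℝ :=
  (∑ i, ∑ j, if i < j then l1norm (normRow T i - normRow T j) else 0) / (n.choose 2)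

theorem stmt_6 {n : ℕ} (G : SimpleGraph (Fin n)) [DecidableRel G.Adj]
    (hconn : G.Connected)
    (hodd : ∃ (v : Fin n) (w : G.Walk v v), Odd w.length) :
    let π : Fin n → ℝ := fun i => Real.sqrt (G.degree i + 1)
    let Atil : Matrix (Fin n) (Fin n) ℝ := Matrix.of fun i j =>
      (((if G.Adj i j then 1 else 0) + (if i = j then 1 else 0) : ℝ)) / (π i * π j)
    Tendsto (fun k => smoothS (Atil ^ k)) atTop (nhds 0) := by
  intro π Atil
  by_cases hn2 : 2 ≤ n
  case neg =>
    -- degenerate case: no pair i < j exists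
    have hz : ∀ T : Matrix (Fin n) (Fin n) ℝ, smoothS T = 0 := by
      intro T
      unfold smoothS
      rw [Finset.sum_eq_zero, zero_div]
      intro i _
      rw [Finset.sum_eq_zero]
      intro j _
      rw [if_neg]
      have hi := i.2
      have hj := j.2
      intro hlt
      have : (i : ℕ) < (j : ℕ) := hlt
      omega
    simpa [hz] using (tendsto_const_nhds : Tendsto (fun _ : ℕ => (0:ℝ)) atTop (nhds 0))
  case pos =>
  have hne : (Finset.univ : Finset (Fin n)).Nonempty := ⟨⟨0, by omega⟩, mem_univ _⟩
  -- basic facts about π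
  have hπpos : ∀ i, 0 < π i := fun i => Real.sqrt_pos.mpr (by positivity)
  have hπne : ∀ i, π i ≠ 0 := fun i => (hπpos i).ne'
  have hπsq : ∀ i, π i ^ 2 = (G.degree i : ℝ) + 1 := fun i => Real.sq_sqrt (by positivity)
  set Mf : Fin n → Fin n → ℝ :=
    fun i j => (if G.Adj i j then (1:ℝ) else 0) + (if i = j then 1 else 0) with hMfdef
  have hAtil : ∀ i j, Atil i j = Mf i j / (π i * π j) := fun i j => rfl
  have hMf0 : ∀ i j, 0 ≤ Mf i j := by
    intro i j; simp only [hMfdef]; positivity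
  have hMfsym : ∀ i j, Mf i j = Mf j i := by
    intro i j
    simp only [hMfdef, G.adj_comm i j]
    congr 1
    simp [eq_comm]
  have hMfrow : ∀ i, ∑ j, Mf i j = π i ^ 2 := by
    intro i
    rw [hπsq]
    simp only [hMfdef, Finset.sum_add_distrib]
    congr 1
    · rw [Finset.sum_boole, SimpleGraph.degree, SimpleGraph.neighborFinset_eq_filter]
    · simp
  have hMfcol : ∀ j, ∑ i, Mf i j = π j ^ 2 := by
    intro j
    rw [Finset.sum_congr rfl fun i _ => hMfsym i j]
    exact hMfrow j
  -- the stochastic matrix P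
  set P : Matrix (Fin n) (Fin n) ℝ := Matrix.of fun i j => Mf i j / π i ^ 2 with hPdef
  have hP0 : ∀ i j, 0 ≤ P i j := fun i j => div_nonneg (hMf0 i j) (sq_nonneg _)
  have hProw : ∀ i, ∑ j, P i j = 1 := by
    intro i
    show (∑ j, Mf i j / π i ^ 2) = 1
    rw [← Finset.sum_div, hMfrow, div_self (pow_ne_zero 2 (hπne i))]
  have hPdiag : ∀ i, 0 < P i i := by
    intro i
    apply div_pos _ (by positivity)
    simp only [hMfdef]
    split_ifs <;> norm_num
  have hPadj : ∀ i j, G.Adj i j → 0 < P i j := by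
    intro i j h
    apply div_pos _ (by positivity)
    simp only [hMfdef, if_pos h]
    split_ifs <;> norm_num
  -- stationary distribution
  set Z : ℝ := ∑ l, π l ^ 2 with hZdef
  have hZpos : 0 < Z := Finset.sum_pos (fun l _ => by positivity) hne
  set μ : Fin n → ℝ := fun j => π j ^ 2 / Z with hμdef
  have hμ0 : ∀ j, 0 ≤ μ j := fun j => div_nonneg (sq_nonneg _) hZpos.le
  have hμsum : ∑ j, μ j = 1 := by
    simp only [hμdef]
    rw [← Finset.sum_div, ← hZdef, div_self hZpos.ne']
  have hstat : ∀ j, ∑ i, μ i * P i j = μ j := by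
    intro j
    have h : ∀ i, μ i * P i j = Mf i j / Z := by
      intro i
      show π i ^ 2 / Z * (Mf i j / π i ^ 2) = Mf i j / Z
      rw [div_mul_div_comm, mul_comm (π i ^ 2) (Mf i j),
        mul_div_mul_right _ _ (pow_ne_zero 2 (hπne i))]
    rw [Finset.sum_congr rfl fun i _ => h i, ← Finset.sum_div, hMfcol]
  -- relation between Atil^k and P^k
  have hrel : ∀ k i j, (Atil ^ k) i j = π i * (P ^ k) i j / π j := by
    intro k
    induction k with
    | zero =>
        intro i j
        rw [pow_zero, pow_zero]
        by_cases h : i = j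
        · subst h
          simp only [Matrix.one_apply_eq, mul_one]
          rw [div_self (hπne i)]
        · rw [Matrix.one_apply_ne h, mul_zero, zero_div]
    | succ k ih =>
        intro i j
        rw [pow_succ, pow_succ, Matrix.mul_apply, Matrix.mul_apply,
          Finset.mul_sum, Finset.sum_div]
        refine Finset.sum_congr rfl fun l _ => ?_
        rw [ih i l, hAtil l j]
        show π i * (P ^ k) i l / π l * (Mf l j / (π l * π j))
          = π i * ((P ^ k) i l * (Mf l j / π l ^ 2)) / π j
        field_simp
  -- primitivity
  have hwalkpos : ∀ (a b : Fin n) (w : G.Walk a b), 0 < (P ^ w.length) a b := by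
    intro a b w
    induction w with
    | nil => simp [Matrix.one_apply_eq]
    | @cons u v' w' h p ih =>
        rw [SimpleGraph.Walk.length_cons, pow_succ', Matrix.mul_apply]
        have hterm : 0 < P u v' * (P ^ p.length) v' w' := mul_pos (hPadj u v' h) ih
        have hsum : P u v' * (P ^ p.length) v' w' ≤ ∑ l, P u l * (P ^ p.length) l w' :=
          Finset.single_le_sum
            (fun l _ => mul_nonneg (hP0 u l) (pow_entry_nonneg P hP0 p.length l w'))
            (mem_univ v')
        exact lt_of_lt_of_le hterm hsum
  have hupward : ∀ (a b : Fin n) (k k' : ℕ), k ≤ k' → 0 < (P ^ k) a b → 0 < (P ^ k') a b := by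
    intro a b k k' hkk' h
    induction k', hkk' using Nat.le_induction with
    | base => exact h
    | succ k' hk ih =>
        rw [pow_succ, Matrix.mul_apply]
        have hterm : 0 < (P ^ k') a b * P b b := mul_pos ih (hPdiag b)
        have hsum : (P ^ k') a b * P b b ≤ ∑ l, (P ^ k') a l * P l b :=
          Finset.single_le_sum
            (fun l _ => mul_nonneg (pow_entry_nonneg P hP0 k' a l) (hP0 l b))
            (mem_univ b)
        exact lt_of_lt_of_le hterm hsum
  set wk : ∀ a b : Fin n, G.Walk a b := fun a b => (hconn.preconnected a b).some with hwkdef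
  set m : ℕ := Finset.univ.sup (fun p : Fin n × Fin n => (wk p.1 p.2).length) with hmdef
  have hPm : ∀ a b, 0 < (P ^ m) a b := fun a b =>
    hupward a b _ m (Finset.le_sup (f := fun p : Fin n × Fin n => (wk p.1 p.2).length)
      (mem_univ (a, b))) (hwalkpos a b (wk a b))
  have hm1 : 1 ≤ m := by
    set a : Fin n := ⟨0, by omega⟩
    set b : Fin n := ⟨1, by omega⟩
    have hab : a ≠ b := by
      intro h
      have := congrArg Fin.val h
      simp [a, b] at this
    have h1 : 1 ≤ (wk a b).length := by
      by_contra h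
      push_neg at h
      interval_cases h' : (wk a b).length
      · exact hab ((wk a b).eq_of_length_eq_zero h')
    calc 1 ≤ (wk a b).length := h1
      _ ≤ m := Finset.le_sup (f := fun p : Fin n × Fin n => (wk p.1 p.2).length)
          (mem_univ (a, b))
  have hnep : (Finset.univ : Finset (Fin n × Fin n)).Nonempty :=
    ⟨(⟨0, by omega⟩, ⟨0, by omega⟩), mem_univ _⟩
  set ε : ℝ := Finset.univ.inf' hnep (fun p : Fin n × Fin n => (P ^ m) p.1 p.2) with hεdef
  have hε : 0 < ε := (Finset.lt_inf'_iff _).2 fun p _ => hPm p.1 p.2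
  have hεle : ∀ a b, ε ≤ (P ^ m) a b := fun a b =>
    Finset.inf'_le _ (mem_univ (a, b))
  -- entrywise convergence
  have key : ∀ i j, Tendsto (fun k => (P ^ k) i j) atTop (nhds (μ j)) := fun i j =>
    pk_tendsto hne P μ hP0 hProw hμ0 hμsum hstat m hm1 ε hε hεle i j
  set Sπ : ℝ := ∑ l, π l with hSdef
  have hSpos : 0 < Sπ := Finset.sum_pos (fun l _ => hπpos l) hne
  have htA : ∀ i j, Tendsto (fun k => (Atil ^ k) i j) atTop (nhds (π i * π j / Z)) := by
    intro i j
    have h1 := ((key i j).const_mul (π i)).div_const (π j)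
    have heq : π i * μ j / π j = π i * π j / Z := by
      show π i * (π j ^ 2 / Z) / π j = π i * π j / Z
      field_simp
    rw [heq] at h1
    exact h1.congr fun k => (hrel k i j).symm
  have hrowl1 : ∀ i, Tendsto (fun k => l1norm ((Atil ^ k) i)) atTop
      (nhds (π i * Sπ / Z)) := by
    intro i
    have h := tendsto_finset_sum (univ : Finset (Fin n)) (fun l _ => (htA i l).abs)
    have heq : ∑ l, |π i * π l / Z| = π i * Sπ / Z := by
      rw [Finset.sum_congr rfl fun l _ => abs_of_nonneg
        (by positivity : (0:ℝ) ≤ π i * π l / Z)]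
      rw [hSdef, Finset.mul_sum, Finset.sum_div]
    rw [heq] at h
    exact h.congr fun k => rfl
  have hlim_ne : ∀ i, π i * Sπ / Z ≠ 0 := fun i => by positivity
  have hnr : ∀ i l, Tendsto (fun k => normRow (Atil ^ k) i l) atTop
      (nhds (π l / Sπ)) := by
    intro i l
    have h := ((hrowl1 i).inv₀ (hlim_ne i)).mul (htA i l)
    have heq : (π i * Sπ / Z)⁻¹ * (π i * π l / Z) = π l / Sπ := by
      rw [inv_div, div_mul_div_comm,
        div_eq_div_iff (mul_ne_zero (mul_ne_zero (hπne i) hSpos.ne') hZpos.ne') hSpos.ne']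
      ring
    rw [heq] at h
    exact h.congr fun k => rfl
  have hpair : ∀ i j, Tendsto
      (fun k => l1norm (normRow (Atil ^ k) i - normRow (Atil ^ k) j)) atTop (nhds 0) := by
    intro i j
    have h := tendsto_finset_sum (univ : Finset (Fin n))
      (fun l _ => ((hnr i l).sub (hnr j l)).abs)
    simp only [sub_self, abs_zero, Finset.sum_const_zero] at h
    exact h.congr fun k => rfl
  have htop : Tendsto (fun k => ∑ i, ∑ j, if i < j then
      l1norm (normRow (Atil ^ k) i - normRow (Atil ^ k) j) else 0) atTop (nhds 0) := by
    have hterm : ∀ i j : Fin n, Tendsto (fun k => if i < j then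
        l1norm (normRow (Atil ^ k) i - normRow (Atil ^ k) j) else 0) atTop (nhds 0) := by
      intro i j
      by_cases hij : i < j
      · simp only [if_pos hij]
        exact hpair i j
      · simp only [if_neg hij]
        exact tendsto_const_nhds
    have h := tendsto_finset_sum (univ : Finset (Fin n)) (fun i (_ : i ∈ univ) =>
      tendsto_finset_sum (univ : Finset (Fin n)) (fun j (_ : j ∈ univ) => hterm i j))
    simpa using h
  have h := htop.div_const ((n.choose 2 : ℕ) : ℝ)
  rw [zero_div] at h
  exact h.congr fun k => rfl
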